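/- arXiv:math/9912007 — 4 statements merged into one kernel-verified Lean document; each statement's English description precedes it below -/
import Mathlib

section
/- The function V₁(x₁, x₂) = 2|x₁| + 2|x₂| witnesses the gain γ = 1 for the system ẋ₁ = |x₁|(-x₁ + |x₂| + u₁), ẋ₂ = x₂(-x₁ - |x₂| + u₂): for all x ∈ ℝ² \ {0}, all u ∈ ℝ², and all viscosity subgradients ζ ∈ ∂_D V₁(x), one has ζ · F(x,u) ≤ -|x|² + |u|², where F(x,u) = (|x₁|(-x₁ + |x₂| + u₁), x₂(-x₁ - |x₂| + u₂)) and |·| denotes the Euclidean norm. -/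
open Topology Filter

/-- The viscosity subdifferential of `V : ℝ² → ℝ` at `x`: the set of `ζ` such that
`liminf_{h→0} (V(x+h) - V(x) - ζ·h)/|h| ≥ 0` (with `|·|` the Euclidean norm). -/
def viscositySubdiff2 (V : ℝ × ℝ → ℝ) (x : ℝ × ℝ) : Set (ℝ × ℝ) :=
  {ζ | ∀ ε > (0 : ℝ), ∀ᶠ h in 𝓝[≠] (0 : ℝ × ℝ),
      V (x + h) - V x - (ζ.1 * h.1 + ζ.2 * h.2) ≥ -ε * Real.sqrt (h.1 ^ 2 + h.2 ^ 2)}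

/-- The closed-loop vector field of system `Σ₁`. -/
def F₁ (x u : ℝ × ℝ) : ℝ × ℝ :=
  (|x.1| * (-x.1 + |x.2| + u.1), x.2 * (-x.1 - |x.2| + u.2))

lemma slope_bound (x ζ v : ℝ × ℝ)
    (hζ : ζ ∈ viscositySubdiff2 (fun x => 2 * |x.1| + 2 * |x.2|) x)
    (hv : v.1 ^ 2 + v.2 ^ 2 = 1) (c : ℝ)
    (hV : ∀ᶠ t in 𝓝[>] (0:ℝ),
      (2 * |(x + t • v).1| + 2 * |(x + t • v).2|) - (2 * |x.1| + 2 * |x.2|) = c * t) :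
    ζ.1 * v.1 + ζ.2 * v.2 ≤ c := by
  by_contra hlt
  push_neg at hlt
  set d := ζ.1 * v.1 + ζ.2 * v.2 with hd
  have hε : (0:ℝ) < (d - c) / 2 := by linarith
  have h1 := hζ _ hε
  have hvne : v ≠ 0 := by
    intro h
    rw [h] at hv
    simp at hv
  have hmap : Tendsto (fun t : ℝ => t • v) (𝓝[>] 0) (𝓝[≠] (0:ℝ×ℝ)) := by
    apply tendsto_nhdsWithin_of_tendsto_nhds_of_eventually_within
    · have hc : Continuous (fun t : ℝ => t • v) := continuous_id.smul continuous_const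
      have := hc.tendsto 0
      simpa using this.mono_left nhdsWithin_le_nhds
    · filter_upwards [self_mem_nhdsWithin] with t ht
      exact smul_ne_zero (ne_of_gt ht) hvne
  have h2 := hmap.eventually h1
  obtain ⟨t, hP, hVt, ht⟩ := (h2.and (hV.and self_mem_nhdsWithin)).exists
  have ht' : (0:ℝ) < t := ht
  simp only [Prod.smul_fst, Prod.smul_snd, smul_eq_mul] at hP
  have hsq : Real.sqrt ((t * v.1) ^ 2 + (t * v.2) ^ 2) = t := by
    have he : (t * v.1) ^ 2 + (t * v.2) ^ 2 = t ^ 2 := by nlinarith [hv]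
    rw [he, Real.sqrt_sq ht'.le]
  rw [hsq] at hP
  have hdot : ζ.1 * (t * v.1) + ζ.2 * (t * v.2) = t * d := by rw [hd]; ring
  rw [hdot, hVt] at hP
  -- hP : c * t - t * d ≥ -((d-c)/2) * t
  nlinarith [hP, ht']

lemma comp1 (x ζ : ℝ × ℝ)
    (hζ : ζ ∈ viscositySubdiff2 (fun x => 2 * |x.1| + 2 * |x.2|) x) :
    ζ.1 * |x.1| = 2 * x.1 := by
  rcases lt_trichotomy x.1 0 with h | h | h
  · have h1 : ζ.1 ≤ -2 := by
      have := slope_bound x ζ (1, 0) hζ (by norm_num) (-2) ?_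
      · simpa using this
      · filter_upwards [Ioo_mem_nhdsGT_of_mem (by constructor <;> [rfl; linarith] :
          (0:ℝ) ∈ Set.Ico 0 (-x.1))] with t ht
        obtain ⟨ht0, ht1⟩ := ht
        have e1 : (x + t • ((1:ℝ), (0:ℝ))).1 = x.1 + t := by simp
        have e2 : (x + t • ((1:ℝ), (0:ℝ))).2 = x.2 := by simp
        rw [e1, e2, abs_of_neg (by linarith : x.1 + t < 0), abs_of_neg h]
        ring
    have h2 : ζ.1 ≥ -2 := by
      have := slope_bound x ζ (-1, 0) hζ (by norm_num) 2 ?_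
      · simp at this; linarith
      · filter_upwards [self_mem_nhdsWithin] with t ht
        have ht0 : (0:ℝ) < t := ht
        have e1 : (x + t • ((-1:ℝ), (0:ℝ))).1 = x.1 - t := by simp; ring
        have e2 : (x + t • ((-1:ℝ), (0:ℝ))).2 = x.2 := by simp
        rw [e1, e2, abs_of_neg (by linarith : x.1 - t < 0), abs_of_neg h]
        ring
    have : ζ.1 = -2 := le_antisymm h1 h2
    rw [this, abs_of_neg h]; ring
  · simp [h]
  · have h1 : ζ.1 ≤ 2 := by
      have := slope_bound x ζ (1, 0) hζ (by norm_num) 2 ?_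
      · simpa using this
      · filter_upwards [self_mem_nhdsWithin] with t ht
        have ht0 : (0:ℝ) < t := ht
        have e1 : (x + t • ((1:ℝ), (0:ℝ))).1 = x.1 + t := by simp
        have e2 : (x + t • ((1:ℝ), (0:ℝ))).2 = x.2 := by simp
        rw [e1, e2, abs_of_pos (by linarith : (0:ℝ) < x.1 + t), abs_of_pos h]
        ring
    have h2 : ζ.1 ≥ 2 := by
      have := slope_bound x ζ (-1, 0) hζ (by norm_num) (-2) ?_
      · simp at this; linarith
      · filter_upwards [Ioo_mem_nhdsGT_of_mem (by constructor <;> [rfl; linarith] :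
          (0:ℝ) ∈ Set.Ico 0 x.1)] with t ht
        obtain ⟨ht0, ht1⟩ := ht
        have e1 : (x + t • ((-1:ℝ), (0:ℝ))).1 = x.1 - t := by simp; ring
        have e2 : (x + t • ((-1:ℝ), (0:ℝ))).2 = x.2 := by simp
        rw [e1, e2, abs_of_pos (by linarith : (0:ℝ) < x.1 - t), abs_of_pos h]
        ring
    have : ζ.1 = 2 := le_antisymm h1 h2
    rw [this, abs_of_pos h]

lemma comp2 (x ζ : ℝ × ℝ)
    (hζ : ζ ∈ viscositySubdiff2 (fun x => 2 * |x.1| + 2 * |x.2|) x) :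
    ζ.2 * x.2 = 2 * |x.2| := by
  rcases lt_trichotomy x.2 0 with h | h | h
  · have h1 : ζ.2 ≤ -2 := by
      have := slope_bound x ζ (0, 1) hζ (by norm_num) (-2) ?_
      · simpa using this
      · filter_upwards [Ioo_mem_nhdsGT_of_mem (by constructor <;> [rfl; linarith] :
          (0:ℝ) ∈ Set.Ico 0 (-x.2))] with t ht
        obtain ⟨ht0, ht1⟩ := ht
        have e1 : (x + t • ((0:ℝ), (1:ℝ))).1 = x.1 := by simp
        have e2 : (x + t • ((0:ℝ), (1:ℝ))).2 = x.2 + t := by simp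
        rw [e1, e2, abs_of_neg (by linarith : x.2 + t < 0), abs_of_neg h]
        ring
    have h2 : ζ.2 ≥ -2 := by
      have := slope_bound x ζ (0, -1) hζ (by norm_num) 2 ?_
      · simp at this; linarith
      · filter_upwards [self_mem_nhdsWithin] with t ht
        have ht0 : (0:ℝ) < t := ht
        have e1 : (x + t • ((0:ℝ), (-1:ℝ))).1 = x.1 := by simp
        have e2 : (x + t • ((0:ℝ), (-1:ℝ))).2 = x.2 - t := by simp; ring
        rw [e1, e2, abs_of_neg (by linarith : x.2 - t < 0), abs_of_neg h]
        ring
    have he : ζ.2 = -2 := le_antisymm h1 h2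
    rw [he, abs_of_neg h]; ring
  · simp [h]
  · have h1 : ζ.2 ≤ 2 := by
      have := slope_bound x ζ (0, 1) hζ (by norm_num) 2 ?_
      · simpa using this
      · filter_upwards [self_mem_nhdsWithin] with t ht
        have ht0 : (0:ℝ) < t := ht
        have e1 : (x + t • ((0:ℝ), (1:ℝ))).1 = x.1 := by simp
        have e2 : (x + t • ((0:ℝ), (1:ℝ))).2 = x.2 + t := by simp
        rw [e1, e2, abs_of_pos (by linarith : (0:ℝ) < x.2 + t), abs_of_pos h]
        ring
    have h2 : ζ.2 ≥ 2 := by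
      have := slope_bound x ζ (0, -1) hζ (by norm_num) (-2) ?_
      · simp at this; linarith
      · filter_upwards [Ioo_mem_nhdsGT_of_mem (by constructor <;> [rfl; linarith] :
          (0:ℝ) ∈ Set.Ico 0 x.2)] with t ht
        obtain ⟨ht0, ht1⟩ := ht
        have e1 : (x + t • ((0:ℝ), (-1:ℝ))).1 = x.1 := by simp
        have e2 : (x + t • ((0:ℝ), (-1:ℝ))).2 = x.2 - t := by simp; ring
        rw [e1, e2, abs_of_pos (by linarith : (0:ℝ) < x.2 - t), abs_of_pos h]
        ring
    have he : ζ.2 = 2 := le_antisymm h1 h2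
    rw [he, abs_of_pos h]

theorem V₁_witnesses_gain_one :
    ∀ x : ℝ × ℝ, x ≠ 0 → ∀ u : ℝ × ℝ,
      ∀ ζ ∈ viscositySubdiff2 (fun x => 2 * |x.1| + 2 * |x.2|) x,
        ζ.1 * (F₁ x u).1 + ζ.2 * (F₁ x u).2 ≤
          -(x.1 ^ 2 + x.2 ^ 2) + (u.1 ^ 2 + u.2 ^ 2) := by
  intro x hx u ζ hζ
  have h1 := comp1 x ζ hζ
  have h2 := comp2 x ζ hζ
  simp only [F₁]
  have e1 : ζ.1 * (|x.1| * (-x.1 + |x.2| + u.1)) = 2 * x.1 * (-x.1 + |x.2| + u.1) := by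
    rw [← mul_assoc, h1]
  have e2 : ζ.2 * (x.2 * (-x.1 - |x.2| + u.2)) = 2 * |x.2| * (-x.1 - |x.2| + u.2) := by
    rw [← mul_assoc, h2]
  rw [e1, e2]
  nlinarith [sq_abs x.2, sq_nonneg (x.1 - u.1), sq_nonneg (|x.2| - u.2), abs_nonneg x.2]
end

section
/- Fix p > 2 and γ > 0. Let g(x) = (|x₁|x₂, -|x₂|x₁), g₀(x) = (-|x₁|x₁, -|x₂|x₂). There is no function V : ℝ² → ℝ≥0, continuous on ℝ² and continuously differentiable on ℝ² \ {0}, such that for all x ≠ 0 and all (u₁, u₂) ∈ ℝ²: ∇V(x) · (g₀(x) + |u₁|^p g(x) - |u₂|^p g(x)) ≤ -|x|² + γu₁² + γu₂². -/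
open Topology Filter

set_option maxHeartbeats 800000

/-- The "L¹ harmonic oscillator" vector field. -/
def gOsc (x : ℝ × ℝ) : ℝ × ℝ := (|x.1| * x.2, -|x.2| * x.1)

/-- The dissipative drift vector field. -/
def gDrift (x : ℝ × ℝ) : ℝ × ℝ := (-|x.1| * x.1, -|x.2| * x.2)

theorem no_C1_storage_for_Sigma_p (p γ : ℝ) (hp : 2 < p) (hγ : 0 < γ) :
    ¬ ∃ V : ℝ × ℝ → ℝ, Continuous V ∧ (∀ x, 0 ≤ V x) ∧
      ContDiffOn ℝ 1 V ({(0, 0)}ᶜ : Set (ℝ × ℝ)) ∧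
      ∀ x : ℝ × ℝ, x ≠ (0, 0) → ∀ u : ℝ × ℝ,
        fderiv ℝ V x (gDrift x + |u.1| ^ p • gOsc x - |u.2| ^ p • gOsc x) ≤
          -(x.1 ^ 2 + x.2 ^ 2) + γ * u.1 ^ 2 + γ * u.2 ^ 2 := by
  rintro ⟨V, hVc, hVpos, hC1, hdiss⟩
  have hp0 : (0:ℝ) < p := by linarith
  have key : ∀ x : ℝ × ℝ, x ≠ (0,0) → fderiv ℝ V x (gOsc x) = 0 := by
    intro x hx
    set D := fderiv ℝ V x with hD
    set A := D (gOsc x) with hA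
    set B := D (gDrift x) with hB
    set C := -(x.1^2 + x.2^2) - B with hC
    have hbound : ∀ t : ℝ, 0 < t → t ^ p * |A| ≤ C + γ * t ^ 2 := by
      intro t ht
      have h1 := hdiss x hx (t, 0)
      have h2 := hdiss x hx (0, t)
      have habs : |t| = t := abs_of_pos ht
      have hz : |(0:ℝ)| ^ p = 0 := by
        rw [abs_zero, Real.zero_rpow hp0.ne']
      simp only [habs, hz, zero_smul, sub_zero, add_zero] at h1 h2
      rw [map_add, map_smul, smul_eq_mul] at h1
      rw [sub_eq_add_neg, ← neg_smul, map_add, map_smul, smul_eq_mul] at h2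
      rcases abs_cases A with ⟨hAe, _⟩ | ⟨hAe, _⟩
      · rw [hAe]; nlinarith [h1]
      · rw [hAe]; nlinarith [h2]
    have hlim : Tendsto (fun t : ℝ => C * t ^ (-p) + γ * t ^ (-(p - 2))) atTop (𝓝 0) := by
      have l1 := (tendsto_rpow_neg_atTop hp0).const_mul C
      have l2 := (tendsto_rpow_neg_atTop (by linarith : (0:ℝ) < p - 2)).const_mul γ
      simpa using l1.add l2
    have hev : ∀ᶠ t : ℝ in atTop, |A| ≤ C * t ^ (-p) + γ * t ^ (-(p - 2)) := by
      filter_upwards [eventually_gt_atTop 0] with t ht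
      have hb := hbound t ht
      have htp : (0:ℝ) < t ^ p := Real.rpow_pos_of_pos ht p
      have e1 : t ^ (-(p - 2)) = t ^ (2:ℕ) / t ^ p := by
        rw [neg_sub, Real.rpow_sub ht]
        norm_num [Real.rpow_natCast]
      have e2 : t ^ (-p) = 1 / t ^ p := by
        rw [Real.rpow_neg ht.le]; ring
      rw [e1, e2]
      have e3 : C * (1 / t ^ p) + γ * ((t:ℝ) ^ (2:ℕ) / t ^ p) = (C + γ * t ^ 2) / t ^ p := by
        ring
      rw [e3, le_div_iff₀ htp]
      nlinarith [hb]
    have hA0 : |A| ≤ 0 := ge_of_tendsto hlim hev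
    exact abs_eq_zero.mp (le_antisymm hA0 (abs_nonneg A))
  have hxne : ((1:ℝ),(0:ℝ)) ≠ ((0:ℝ),(0:ℝ)) := by simp
  have hcont : ContinuousOn (fun y => fderiv ℝ V y) ({((0:ℝ),(0:ℝ))}ᶜ : Set (ℝ × ℝ)) :=
    hC1.continuousOn_fderiv_of_isOpen isOpen_compl_singleton le_rfl
  have hca : ContinuousAt (fun y => fderiv ℝ V y) ((1:ℝ),(0:ℝ)) :=
    hcont.continuousAt (isOpen_compl_singleton.mem_nhds hxne)
  have hpath : ContinuousAt (fun t : ℝ => fderiv ℝ V (1, t)) 0 := by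
    have : Continuous (fun t : ℝ => ((1:ℝ), t)) := by continuity
    exact hca.comp this.continuousAt
  have hψ : ∀ v : ℝ × ℝ, ContinuousAt (fun t : ℝ => fderiv ℝ V (1, t) v) 0 :=
    fun v => ((ContinuousLinearMap.apply ℝ ℝ v).continuous.continuousAt).comp hpath
  have hray : ∀ t : ℝ, 0 < t → fderiv ℝ V (1, t) (1, -1) = 0 := by
    intro t ht
    have hne : ((1:ℝ), t) ≠ ((0:ℝ),(0:ℝ)) := by simp [Prod.ext_iff]
    have h0 := key (1, t) hne
    have hg : gOsc ((1:ℝ), t) = t • (((1:ℝ), (-1:ℝ))) := by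
      simp [gOsc, Prod.ext_iff, abs_of_pos ht]
    rw [hg, map_smul, smul_eq_mul] at h0
    exact (mul_eq_zero.mp h0).resolve_left ht.ne'
  have hray' : ∀ t : ℝ, t < 0 → fderiv ℝ V (1, t) (1, 1) = 0 := by
    intro t ht
    have hne : ((1:ℝ), t) ≠ ((0:ℝ),(0:ℝ)) := by simp [Prod.ext_iff]
    have h0 := key (1, t) hne
    have hg : gOsc ((1:ℝ), t) = t • (((1:ℝ), (1:ℝ))) := by
      simp [gOsc, Prod.ext_iff, abs_of_neg ht]
    rw [hg, map_smul, smul_eq_mul] at h0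
    exact (mul_eq_zero.mp h0).resolve_left ht.ne
  have e1 : fderiv ℝ V ((1:ℝ),(0:ℝ)) (1, -1) = 0 := by
    have t1 : Tendsto (fun t : ℝ => fderiv ℝ V (1, t) (1, -1)) (𝓝[>] (0:ℝ))
        (𝓝 (fderiv ℝ V ((1:ℝ),(0:ℝ)) (1, -1))) :=
      ((hψ (1, -1)).tendsto).mono_left nhdsWithin_le_nhds
    have t2 : Tendsto (fun t : ℝ => fderiv ℝ V (1, t) (1, -1)) (𝓝[>] (0:ℝ)) (𝓝 0) := by
      refine Tendsto.congr' ?_ tendsto_const_nhds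
      filter_upwards [self_mem_nhdsWithin] with t ht
      exact (hray t ht).symm
    exact tendsto_nhds_unique t1 t2
  have e2 : fderiv ℝ V ((1:ℝ),(0:ℝ)) (1, 1) = 0 := by
    have t1 : Tendsto (fun t : ℝ => fderiv ℝ V (1, t) (1, 1)) (𝓝[<] (0:ℝ))
        (𝓝 (fderiv ℝ V ((1:ℝ),(0:ℝ)) (1, 1))) :=
      ((hψ (1, 1)).tendsto).mono_left nhdsWithin_le_nhds
    have t2 : Tendsto (fun t : ℝ => fderiv ℝ V (1, t) (1, 1)) (𝓝[<] (0:ℝ)) (𝓝 0) := by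
      refine Tendsto.congr' ?_ tendsto_const_nhds
      filter_upwards [self_mem_nhdsWithin] with t ht
      exact (hray' t ht).symm
    exact tendsto_nhds_unique t1 t2
  have hsum : fderiv ℝ V ((1:ℝ),(0:ℝ)) (gDrift ((1:ℝ),(0:ℝ))) = 0 := by
    have hgd : gDrift ((1:ℝ),(0:ℝ)) = ((-1:ℝ), (0:ℝ)) := by
      norm_num [gDrift]
    have hdec : ((-1:ℝ), (0:ℝ)) =
        (-(1/2) : ℝ) • ((((1:ℝ), (-1:ℝ))) + (((1:ℝ), (1:ℝ)))) := by
      norm_num [Prod.ext_iff]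
    rw [hgd, hdec, map_smul, map_add, e1, e2]
    simp
  have hfin := hdiss ((1:ℝ),(0:ℝ)) hxne (0, 0)
  have hz : |(0:ℝ)| ^ p = 0 := by rw [abs_zero, Real.zero_rpow hp0.ne']
  simp only [hz, zero_smul, sub_zero, add_zero] at hfin
  rw [hsum] at hfin
  norm_num at hfin
end

section
/- Let V : ℝ² → ℝ be C¹ on ℝ² \ {0} and suppose ∇V(ξ) · g(ξ) = 0 for all ξ ≠ 0, where g(x) = (|x₁|x₂, -|x₂|x₁). Then for every a > 0, ∇V(a, 0) = (0, 0). -/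
open Topology Filter

theorem gradient_vanishes_on_axis (V : ℝ × ℝ → ℝ)
    (hVC1 : ContDiffOn ℝ 1 V ({(0, 0)}ᶜ : Set (ℝ × ℝ)))
    (horth : ∀ ξ : ℝ × ℝ, ξ ≠ (0, 0) → fderiv ℝ V ξ (gOsc ξ) = 0) :
    ∀ a : ℝ, 0 < a → fderiv ℝ V (a, 0) = 0 := by
  intro a ha
  have hso : IsOpen ({(0, 0)}ᶜ : Set (ℝ × ℝ)) := isOpen_compl_singleton
  have hmem : ((a, 0) : ℝ × ℝ) ∈ ({(0, 0)}ᶜ : Set (ℝ × ℝ)) := by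
    simp [Prod.ext_iff]
    exact fun h => absurd h ha.ne'
  have hcont : ContinuousOn (fun x => fderiv ℝ V x) ({(0, 0)}ᶜ : Set (ℝ × ℝ)) :=
    hVC1.continuousOn_fderiv_of_isOpen hso le_rfl
  have hDcont : ContinuousAt (fun x => fderiv ℝ V x) (a, 0) :=
    hcont.continuousAt (hso.mem_nhds hmem)
  set φ : ℝ → ℝ := fun t => fderiv ℝ V (a, t) (1, 0) with hφdef
  set ψ : ℝ → ℝ := fun t => fderiv ℝ V (a, t) (0, 1) with hψdef
  have hcurve : ContinuousAt (fun t : ℝ => ((a, t) : ℝ × ℝ)) 0 := by fun_prop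
  have hφc : ContinuousAt φ 0 :=
    ((ContinuousLinearMap.apply ℝ ℝ ((1 : ℝ), (0 : ℝ))).continuous.continuousAt).comp
      (hDcont.comp hcurve)
  have hψc : ContinuousAt ψ 0 :=
    ((ContinuousLinearMap.apply ℝ ℝ ((0 : ℝ), (1 : ℝ))).continuous.continuousAt).comp
      (hDcont.comp hcurve)
  have key : ∀ t : ℝ, t ≠ 0 → a * t * φ t - |t| * a * ψ t = 0 := by
    intro t ht
    have hne : ((a, t) : ℝ × ℝ) ≠ (0, 0) := by
      simp [Prod.ext_iff]
      exact fun _ => ht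
    have h0:= horth (a, t) hne
    have hg : gOsc (a, t) = (a * t) • ((1 : ℝ), (0 : ℝ)) + (-(|t| * a)) • ((0 : ℝ), (1 : ℝ)) := by
      simp [gOsc, abs_of_pos ha, Prod.ext_iff]
    rw [hg, map_add, map_smul, map_smul] at h0
    simpa [hφdef, hψdef, smul_eq_mul, sub_eq_add_neg, mul_comm] using h0
  have h1 : φ 0 - ψ 0 = 0 := by
    have hc : Tendsto (fun t => φ t - ψ t) (𝓝[>] (0 : ℝ)) (𝓝 (φ 0 - ψ 0)) :=
      ((hφc.sub hψc).tendsto).mono_left nhdsWithin_le_nhds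
    have hzero : ∀ᶠ t in 𝓝[>] (0 : ℝ), φ t - ψ t = 0 := by
      filter_upwards [self_mem_nhdsWithin] with t ht
      have ht' : (0 : ℝ) < t := ht
      have := key t ht'.ne'
      rw [abs_of_pos ht'] at this
      have hat : a * t ≠ 0 := by positivity
      have : a * t * (φ t - ψ t) = 0 := by ring_nf; ring_nf at this; linarith
      rcases mul_eq_zero.mp this with h | h
      · exact absurd h hat
      · exact h
    have hc' : Tendsto (fun t => φ t - ψ t) (𝓝[>] (0 : ℝ)) (𝓝 0) := by
      refine Tendsto.congr' (hzero.mono fun t h => h.symm) tendsto_const_nhds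
    exact tendsto_nhds_unique hc hc'
  have h2 : φ 0 + ψ 0 = 0 := by
    have hc : Tendsto (fun t => φ t + ψ t) (𝓝[<] (0 : ℝ)) (𝓝 (φ 0 + ψ 0)) :=
      ((hφc.add hψc).tendsto).mono_left nhdsWithin_le_nhds
    have hzero : ∀ᶠ t in 𝓝[<] (0 : ℝ), φ t + ψ t = 0 := by
      filter_upwards [self_mem_nhdsWithin] with t ht
      have ht' : t < 0 := ht
      have := key t ht'.ne
      rw [abs_of_neg ht'] at this
      have hat : a * t ≠ 0 := mul_ne_zero ha.ne' ht'.ne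
      have : a * t * (φ t + ψ t) = 0 := by ring_nf; ring_nf at this; linarith
      rcases mul_eq_zero.mp this with h | h
      · exact absurd h hat
      · exact h
    have hc' : Tendsto (fun t => φ t + ψ t) (𝓝[<] (0 : ℝ)) (𝓝 0) := by
      refine Tendsto.congr' (hzero.mono fun t h => h.symm) tendsto_const_nhds
    exact tendsto_nhds_unique hc hc'
  have hφ0 : φ 0 = 0 := by linarith
  have hψ0 : ψ 0 = 0 := by linarith
  apply ContinuousLinearMap.ext
  intro v
  have hv : v = v.1 • ((1 : ℝ), (0 : ℝ)) + v.2 • ((0 : ℝ), (1 : ℝ)) := by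
    simp [Prod.ext_iff]
  rw [hv, map_add, map_smul, map_smul]
  have e1 : fderiv ℝ V (a, 0) ((1 : ℝ), (0 : ℝ)) = 0 := hφ0
  have e2 : fderiv ℝ V (a, 0) ((0 : ℝ), (1 : ℝ)) = 0 := hψ0
  simp [e1, e2]
end

section
/- Let f : ℝ × ℝ → ℝ be defined by f(x, u) = (|u| + x)·ψ(x, |u|) for x ≥ 0 and f(x,u) = x² + |u|·ψ(0, |u|) for x < 0, where ψ(a,b) = (1/2)[φ(b-a, b+a-2) + (b-a)] and φ(s,t) = sign(s)·max{min{(|s|-t)/2, |s|}, 0}. Let V₃(x) = max{|x|, 2x - 1}. Then V₃ witnesses gain 1 for ẋ = f(x,u): for all x ≠ 0, all u ∈ ℝ, and all ζ ∈ ∂_D V₃(x), ζ·f(x,u) ≤ u² - x². -/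
open Topology Filter

/-- The viscosity subdifferential of `V : ℝ → ℝ` at `x`. -/
def viscositySubdiff1 (V : ℝ → ℝ) (x : ℝ) : Set ℝ :=
  {ζ | ∀ ε > (0 : ℝ), ∀ᶠ h in 𝓝[≠] (0 : ℝ),
      V (x + h) - V x - ζ * h ≥ -ε * |h|}

/-- The gluing function `φ`. -/
noncomputable def phi (s t : ℝ) : ℝ :=
  Real.sign s * max (min ((|s| - t) / 2) |s|) 0

/-- The function `ψ`. -/
noncomputable def psi (a b : ℝ) : ℝ :=
  (phi (b - a) (b + a - 2) + (b - a)) / 2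

/-- The right-hand side of system `Σ₃`. -/
noncomputable def f₃ (x u : ℝ) : ℝ :=
  if 0 ≤ x then (|u| + x) * psi x |u| else x ^ 2 + |u| * psi 0 |u|

open Set

lemma zeta_le (V : ℝ → ℝ) (x ζ m δ : ℝ) (hδ : 0 < δ)
    (hζ : ζ ∈ viscositySubdiff1 V x)
    (hr : ∀ t, 0 < t → t < δ → V (x + t) - V x = m * t) : ζ ≤ m := by
  refine le_of_forall_pos_le_add (fun ε hε => ?_)
  have h1 := hζ ε hε
  have hle : 𝓝[>] (0:ℝ) ≤ 𝓝[≠] (0:ℝ) :=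
    nhdsWithin_mono 0 (fun t ht => by simpa using ne_of_gt ht)
  have h2 : ∀ᶠ t in 𝓝[>] (0:ℝ), V (x+t) - V x - ζ * t ≥ -ε * |t| := h1.filter_mono hle
  have h3 : Ioo (0:ℝ) δ ∈ 𝓝[>] (0:ℝ) := Ioo_mem_nhdsGT_of_mem ⟨le_refl _, hδ⟩
  obtain ⟨t, ht1, ht0, htδ⟩ := (h2.and (eventually_of_mem h3 (fun t ht => ht))).exists
  rw [hr t ht0 htδ, abs_of_pos ht0] at ht1
  nlinarith

lemma zeta_ge (V : ℝ → ℝ) (x ζ m δ : ℝ) (hδ : 0 < δ)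
    (hζ : ζ ∈ viscositySubdiff1 V x)
    (hr : ∀ t, -δ < t → t < 0 → V (x + t) - V x = m * t) : m ≤ ζ := by
  refine le_of_forall_pos_le_add (fun ε hε => ?_)
  have h1 := hζ ε hε
  have hle : 𝓝[<] (0:ℝ) ≤ 𝓝[≠] (0:ℝ) :=
    nhdsWithin_mono 0 (fun t ht => by simpa using ne_of_lt ht)
  have h2 : ∀ᶠ t in 𝓝[<] (0:ℝ), V (x+t) - V x - ζ * t ≥ -ε * |t| := h1.filter_mono hle
  have h3 : Ioo (-δ) (0:ℝ) ∈ 𝓝[<] (0:ℝ) :=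
    Ioo_mem_nhdsLT_of_mem ⟨by linarith, le_refl _⟩
  obtain ⟨t, ht1, htδ, ht0⟩ := (h2.and (eventually_of_mem h3 (fun t ht => ht))).exists
  rw [hr t htδ ht0, abs_of_neg ht0] at ht1
  nlinarith

lemma V3_of_le_one {y : ℝ} (hy : y ≤ 1) : max |y| (2 * y - 1) = |y| :=
  max_eq_left (by have := le_abs_self y; linarith)

lemma V3_of_ge_one {y : ℝ} (hy : 1 ≤ y) : max |y| (2 * y - 1) = 2 * y - 1 :=
  max_eq_right (by rw [abs_of_nonneg (by linarith)]; linarith)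

lemma phi_nonpos {s : ℝ} (t : ℝ) (hs : s ≤ 0) : phi s t ≤ 0 := by
  rcases eq_or_lt_of_le hs with h | h
  · simp [phi, h]
  · unfold phi
    rw [Real.sign_of_neg h]
    nlinarith [le_max_right (min ((|s| - t) / 2) |s|) (0:ℝ)]

lemma phi_nonneg {s : ℝ} (t : ℝ) (hs : 0 ≤ s) : 0 ≤ phi s t := by
  rcases eq_or_lt_of_le hs with h | h
  · simp [phi, ← h]
  · unfold phi
    rw [Real.sign_of_pos h]
    nlinarith [le_max_right (min ((|s| - t) / 2) |s|) (0:ℝ)]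

lemma phi_le_abs (s t : ℝ) : phi s t ≤ |s| := by
  rcases lt_trichotomy s 0 with h | h | h
  · exact le_trans (phi_nonpos t h.le) (abs_nonneg s)
  · simp [phi, h]
  · unfold phi
    rw [Real.sign_of_pos h, one_mul]
    exact max_le (min_le_right _ _) (abs_nonneg s)

/-- On the square `[0,1]²`, `phi (b-x) (b+x-2) = b - x`. -/
lemma phi_eq_inner {x b : ℝ} (hx0 : 0 ≤ x) (hx1 : x ≤ 1) (hb0 : 0 ≤ b)
    (hb1 : b ≤ 1) : phi (b - x) (b + x - 2) = b - x := by
  rcases lt_trichotomy (b - x) 0 with h | h | h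
  · unfold phi
    rw [Real.sign_of_neg h, abs_of_neg h,
      min_eq_right (by linarith), max_eq_left (by linarith)]
    ring
  · simp [phi, h]
  · unfold phi
    rw [Real.sign_of_pos h, abs_of_pos h,
      min_eq_right (by linarith), max_eq_left h.le]
    ring

/-- On the region `x ≥ 1, b ≥ 1`, `phi (b-x) (b+x-2) = 0`. -/
lemma phi_eq_outer {x b : ℝ} (hx : 1 ≤ x) (hb : 1 ≤ b) :
    phi (b - x) (b + x - 2) = 0 := by
  rcases lt_trichotomy (b - x) 0 with h | h | h
  · unfold phi
    rw [Real.sign_of_neg h, abs_of_neg h,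
      max_eq_right (le_trans (min_le_left _ _) (by linarith))]
    ring
  · simp [phi, h]
  · unfold phi
    rw [Real.sign_of_pos h, abs_of_pos h,
      max_eq_right (le_trans (min_le_left _ _) (by linarith))]
    ring

lemma f_eq_inner {x u : ℝ} (hx0 : 0 ≤ x) (hx1 : x ≤ 1) (hu : |u| ≤ 1) :
    f₃ x u = u ^ 2 - x ^ 2 := by
  rw [f₃, if_pos hx0, psi, phi_eq_inner hx0 hx1 (abs_nonneg u) hu]
  have := sq_abs u
  nlinarith

lemma f_eq_outer {x u : ℝ} (hx : 1 ≤ x) (hu : 1 ≤ |u|) :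
    f₃ x u = (u ^ 2 - x ^ 2) / 2 := by
  rw [f₃, if_pos (by linarith), psi, phi_eq_outer hx hu]
  have := sq_abs u
  nlinarith

lemma f_le_right {x u : ℝ} (hx0 : 0 ≤ x) (hu : x ≤ |u|) :
    f₃ x u ≤ u ^ 2 - x ^ 2 := by
  rw [f₃, if_pos hx0, psi]
  have h1 : phi (|u| - x) (|u| + x - 2) ≤ |u| - x :=
    le_trans (phi_le_abs _ _) (le_of_eq (abs_of_nonneg (by linarith)))
  have h2 : 0 ≤ |u| + x := by positivity
  have := sq_abs u
  nlinarith

lemma f_le_half {x u : ℝ} (hx : 1 ≤ x) (hu : |u| ≤ 1) :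
    f₃ x u ≤ (u ^ 2 - x ^ 2) / 2 := by
  rw [f₃, if_pos (by linarith), psi]
  have h1 : phi (|u| - x) (|u| + x - 2) ≤ 0 := phi_nonpos _ (by linarith)
  have h2 : 0 ≤ |u| + x := by positivity
  have := sq_abs u
  nlinarith

theorem V3_witnesses_gain_one :
    ∀ x : ℝ, x ≠ 0 → ∀ u : ℝ,
      ∀ ζ ∈ viscositySubdiff1 (fun x => max |x| (2 * x - 1)) x,
        ζ * f₃ x u ≤ u ^ 2 - x ^ 2 := by
  intro x hx u ζ hζ
  set V : ℝ → ℝ := fun x => max |x| (2 * x - 1) with hV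
  rcases lt_trichotomy x 0 with hx0 | hx0 | hx0
  · -- x < 0 : ζ = -1, f ≥ x² - u²
    have hr : ∀ t, 0 < t → t < -x → V (x + t) - V x = (-1) * t := by
      intro t ht1 ht2
      simp only [hV]
      rw [V3_of_le_one (by linarith), V3_of_le_one (by linarith),
        abs_of_neg (by linarith : x + t < 0), abs_of_neg hx0]
      ring
    have hl : ∀ t, -(-x) < t → t < 0 → V (x + t) - V x = (-1) * t := by
      intro t ht1 ht2
      simp only [hV]
      rw [V3_of_le_one (by linarith), V3_of_le_one (by linarith),
        abs_of_neg (by linarith : x + t < 0), abs_of_neg hx0]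
      ring
    have h1 : ζ = -1 :=
      le_antisymm (zeta_le V x ζ (-1) (-x) (by linarith) hζ hr)
        (zeta_ge V x ζ (-1) (-x) (by linarith) hζ hl)
    rw [f₃, if_neg (by linarith), h1]
    have hb : 0 ≤ psi 0 |u| := by
      rw [psi]
      have hp : 0 ≤ phi (|u| - 0) (|u| + 0 - 2) :=
        phi_nonneg _ (by simp [abs_nonneg])
      have := abs_nonneg u
      nlinarith
    have := sq_abs u
    nlinarith [mul_nonneg (abs_nonneg u) hb]
  · exact absurd hx0 hx
  · -- x > 0
    rcases lt_trichotomy x 1 with hx1 | hx1 | hx1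
    · -- 0 < x < 1 : ζ = 1
      have hδ : 0 < min x (1 - x) := lt_min hx0 (by linarith)
      have hr : ∀ t, 0 < t → t < min x (1 - x) → V (x + t) - V x = 1 * t := by
        intro t ht1 ht2
        have := lt_min_iff.mp ht2
        simp only [hV]
        rw [V3_of_le_one (by linarith [this.2]), V3_of_le_one hx1.le,
          abs_of_pos (by linarith : 0 < x + t), abs_of_pos hx0]
        ring
      have hl : ∀ t, -(min x (1 - x)) < t → t < 0 → V (x + t) - V x = 1 * t := by
        intro t ht1 ht2
        have h2 : -x < t := by
          have := min_le_left x (1 - x); linarith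
        simp only [hV]
        rw [V3_of_le_one (by linarith), V3_of_le_one hx1.le,
          abs_of_pos (by linarith : 0 < x + t), abs_of_pos hx0]
        ring
      have h1 : ζ = 1 :=
        le_antisymm (zeta_le V x ζ 1 _ hδ hζ hr) (zeta_ge V x ζ 1 _ hδ hζ hl)
      rw [h1, one_mul]
      rcases le_total (|u|) 1 with hu | hu
      · exact le_of_eq (f_eq_inner hx0.le hx1.le hu)
      · exact f_le_right hx0.le (by linarith)
    · -- x = 1 : 1 ≤ ζ ≤ 2
      subst hx1
      have hr : ∀ t, 0 < t → t < 1 → V (1 + t) - V 1 = 2 * t := by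
        intro t ht1 ht2
        simp only [hV]
        rw [V3_of_ge_one (by linarith), V3_of_ge_one le_rfl]
        ring
      have hl : ∀ t, -1 < t → t < 0 → V (1 + t) - V 1 = 1 * t := by
        intro t ht1 ht2
        simp only [hV]
        rw [V3_of_le_one (by linarith), V3_of_le_one le_rfl,
          abs_of_pos (by linarith : (0:ℝ) < 1 + t), abs_one]
        ring
      have h2 : ζ ≤ 2 := zeta_le V 1 ζ 2 1 one_pos hζ hr
      have h1 : 1 ≤ ζ := zeta_ge V 1 ζ 1 1 one_pos hζ hl
      rcases le_total (|u|) 1 with hu | hu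
      · have hf : f₃ 1 u = u ^ 2 - 1 ^ 2 := f_eq_inner zero_le_one le_rfl hu
        have hf0 : f₃ 1 u ≤ 0 := by
          rw [hf]; nlinarith [sq_abs u, abs_nonneg u]
        nlinarith
      · have hf : f₃ 1 u = (u ^ 2 - 1 ^ 2) / 2 := f_eq_outer le_rfl hu
        have hf0 : 0 ≤ f₃ 1 u := by
          rw [hf]; have := sq_abs u; nlinarith
        nlinarith
    · -- x > 1 : ζ = 2
      have hδ : 0 < x - 1 := by linarith
      have hr : ∀ t, 0 < t → t < x - 1 → V (x + t) - V x = 2 * t := by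
        intro t ht1 ht2
        simp only [hV]
        rw [V3_of_ge_one (by linarith), V3_of_ge_one hx1.le]
        ring
      have hl : ∀ t, -(x - 1) < t → t < 0 → V (x + t) - V x = 2 * t := by
        intro t ht1 ht2
        simp only [hV]
        rw [V3_of_ge_one (by linarith), V3_of_ge_one hx1.le]
        ring
      have h1 : ζ = 2 :=
        le_antisymm (zeta_le V x ζ 2 _ hδ hζ hr) (zeta_ge V x ζ 2 _ hδ hζ hl)
      rw [h1]
      rcases le_total (|u|) 1 with hu | hu
      · have := f_le_half hx1.le hu
        linarith
      · have := f_eq_outer hx1.le hu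
        linarith
end
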